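/- Let f : ℝ^{m×n} → ℝ be continuously differentiable with Frobenius gradient G (i.e., the Fréchet derivative of f at Y applied to X equals ⟨G(Y), X⟩_F). Let Û ∈ ℝ^{m×k}, V̂ ∈ ℝ^{n×k} have orthonormal columns and let Ŝ : ℝ → ℝ^{k×k} be differentiable on [t0, t1] with Ŝ'(t) = −Ûᵀ G(Û Ŝ(t) V̂ᵀ) V̂. Set Ŷ(t) = Û Ŝ(t) V̂ᵀ, Y0 = Ŷ(t0), Ŷ1 = Ŷ(t1), h = t1 − t0, and let Y1 ∈ ℝ^{m×n} satisfy ‖Y1 − Ŷ1‖_F ≤ ϑ. Then f(Y1) ≤ f(Y0) − α² h + β ϑ, where α = min_{t ∈ [t0,t1]} ‖Ûᵀ G(Ŷ(t)) V̂‖_F and β = max_{τ ∈ [0,1]} ‖G(τ Y1 + (1−τ) Ŷ1)‖_F. -/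

import Mathlib

open Matrix

attribute [local instance] Matrix.frobeniusSeminormedAddCommGroup
  Matrix.frobeniusNormedAddCommGroup Matrix.frobeniusNormedSpace

/-- The Frobenius inner product `⟨A, B⟩_F = trace(Aᵀ B)`. -/
noncomputable def frobInner {m n : ℕ} (A B : Matrix (Fin m) (Fin n) ℝ) : ℝ :=
  (Aᵀ * B).trace

/-- The Frobenius norm `‖A‖_F = ⟨A, A⟩_F^{1/2}`. -/
noncomputable def frobNorm {m n : ℕ} (A : Matrix (Fin m) (Fin n) ℝ) : ℝ :=
  Real.sqrt (frobInner A A)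

lemma frobInner_eq_sum {m n : ℕ} (A B : Matrix (Fin m) (Fin n) ℝ) :
    frobInner A B = ∑ j, ∑ i, A i j * B i j := by
  simp [frobInner, Matrix.trace, Matrix.diag, Matrix.mul_apply, Matrix.transpose_apply]

lemma frobInner_self_nonneg {m n : ℕ} (A : Matrix (Fin m) (Fin n) ℝ) :
    0 ≤ frobInner A A := by
  rw [frobInner_eq_sum]
  refine Finset.sum_nonneg fun j _ => Finset.sum_nonneg fun i _ => mul_self_nonneg _

lemma frobNorm_nonneg {m n : ℕ} (A : Matrix (Fin m) (Fin n) ℝ) : 0 ≤ frobNorm A :=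
  Real.sqrt_nonneg _

lemma frobNorm_sq {m n : ℕ} (A : Matrix (Fin m) (Fin n) ℝ) :
    frobNorm A ^ 2 = frobInner A A :=
  Real.sq_sqrt (frobInner_self_nonneg A)

lemma frobInner_le {m n : ℕ} (A B : Matrix (Fin m) (Fin n) ℝ) :
    frobInner A B ≤ frobNorm A * frobNorm B := by
  have h := Finset.sum_mul_sq_le_sq_mul_sq Finset.univ
    (fun p : Fin n × Fin m => A p.2 p.1) (fun p : Fin n × Fin m => B p.2 p.1)
  have h1 : frobInner A B = ∑ p : Fin n × Fin m, A p.2 p.1 * B p.2 p.1 := by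
    rw [frobInner_eq_sum, ← Finset.sum_product']
    rfl
  have h2 : frobInner A A = ∑ p : Fin n × Fin m, A p.2 p.1 ^ 2 := by
    rw [frobInner_eq_sum, ← Finset.sum_product']
    simp [sq]
  have h3 : frobInner B B = ∑ p : Fin n × Fin m, B p.2 p.1 ^ 2 := by
    rw [frobInner_eq_sum, ← Finset.sum_product']
    simp [sq]
  calc frobInner A B ≤ |frobInner A B| := le_abs_self _
    _ = Real.sqrt ((frobInner A B) ^ 2) := (Real.sqrt_sq_eq_abs _).symm
    _ ≤ Real.sqrt (frobInner A A * frobInner B B) := by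
        apply Real.sqrt_le_sqrt; rw [h1, h2, h3]; exact h
    _ = frobNorm A * frobNorm B := by
        rw [frobNorm, frobNorm, Real.sqrt_mul (frobInner_self_nonneg A)]

lemma frobNorm_eq_norm {m n : ℕ} (A : Matrix (Fin m) (Fin n) ℝ) :
    frobNorm A = ‖A‖ := by
  rw [Matrix.frobenius_norm_def, frobNorm, frobInner_eq_sum]
  rw [Real.sqrt_eq_rpow]
  congr 1
  rw [Finset.sum_comm]
  simp [Real.norm_eq_abs, sq_abs, pow_two]

lemma mvt_le {g g' : ℝ → ℝ} {a b C : ℝ} (hab : a ≤ b)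
    (hd : ∀ t ∈ Set.Icc a b, HasDerivAt g (g' t) t)
    (hC : ∀ t ∈ Set.Icc a b, g' t ≤ C) : g b ≤ g a + C * (b - a) := by
  rcases eq_or_lt_of_le hab with rfl | hab'
  · simp
  · have hcont : ContinuousOn g (Set.Icc a b) := fun t htmem =>
      ((hd t htmem).continuousAt).continuousWithinAt
    obtain ⟨c, hc, hslope⟩ := exists_hasDerivAt_eq_slope g g' hab' hcont
      (fun x hx => hd x (Set.mem_Icc_of_Ioo hx))
    have hcb : g' c ≤ C := hC c (Set.mem_Icc_of_Ioo hc)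
    have hba : 0 < b - a := sub_pos.2 hab'
    have : (g b - g a) / (b - a) ≤ C := hslope ▸ hcb
    nlinarith [(div_le_iff₀ hba).1 this]

lemma mul_decomp {m n k : ℕ} (U : Matrix (Fin m) (Fin k) ℝ) (V : Matrix (Fin n) (Fin k) ℝ)
    (S : Matrix (Fin k) (Fin k) ℝ) :
    U * S * Vᵀ = ∑ i, ∑ j, S i j • (U * Matrix.single i j (1:ℝ) * Vᵀ) := by
  conv_lhs => rw [matrix_eq_sum_single S]
  simp only [Matrix.mul_sum, Matrix.sum_mul]
  refine Finset.sum_congr rfl fun i _ => Finset.sum_congr rfl fun j _ => ?_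
  have : Matrix.single i j (S i j) = S i j • Matrix.single i j (1:ℝ) := by
    rw [smul_single, smul_eq_mul, mul_one]
  rw [this, Matrix.mul_smul, Matrix.smul_mul]

lemma hasDerivAt_USVt {m n k : ℕ} (U : Matrix (Fin m) (Fin k) ℝ) (V : Matrix (Fin n) (Fin k) ℝ)
    {S : ℝ → Matrix (Fin k) (Fin k) ℝ} {S' : Matrix (Fin k) (Fin k) ℝ} {t : ℝ}
    (h : ∀ i j, HasDerivAt (fun s => S s i j) (S' i j) t) :
    HasDerivAt (fun s => U * S s * Vᵀ) (U * S' * Vᵀ) t := by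
  have key : HasDerivAt (fun s => ∑ i, ∑ j, S s i j • (U * Matrix.single i j (1:ℝ) * Vᵀ))
      (∑ i, ∑ j, S' i j • (U * Matrix.single i j (1:ℝ) * Vᵀ)) t := by
    refine HasDerivAt.fun_sum fun i _ => HasDerivAt.fun_sum fun j _ => ?_
    exact (h i j).smul_const _
  rw [mul_decomp U V S']
  exact key.congr_of_eventuallyEq
    (Filter.Eventually.of_forall fun s => (mul_decomp U V (S s)))

lemma frobInner_conj {m n k : ℕ} (A : Matrix (Fin m) (Fin n) ℝ)
    (U : Matrix (Fin m) (Fin k) ℝ) (V : Matrix (Fin n) (Fin k) ℝ)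
    (S : Matrix (Fin k) (Fin k) ℝ) :
    frobInner A (U * S * Vᵀ) = frobInner (Uᵀ * A * V) S := by
  unfold frobInner
  have h1 : Aᵀ * (U * S * Vᵀ) = (Aᵀ * U) * S * Vᵀ := by
    simp [Matrix.mul_assoc]
  have h2 : (Uᵀ * A * V)ᵀ * S = Vᵀ * (Aᵀ * U) * S := by
    simp [Matrix.transpose_mul, Matrix.mul_assoc]
  rw [h1, h2, Matrix.trace_mul_cycle (Aᵀ * U) S Vᵀ]

lemma frobInner_neg_right {m n : ℕ} (A B : Matrix (Fin m) (Fin n) ℝ) :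
    frobInner A (-B) = -frobInner A B := by
  simp [frobInner, Matrix.mul_neg]

set_option maxHeartbeats 1000000 in
/-- Theorem 5: one step of the rank-adaptive integrator (Galerkin S-step plus rank truncation
with tolerance `ϑ`) applied to the gradient system `Ȧ = -∇f(A)` satisfies
`f(Y₁) ≤ f(Y₀) - α² h + β ϑ`. -/
theorem rank_adaptive_gradient_decrease
    {m n k : ℕ} {t0 t1 ϑ : ℝ}
    (f : Matrix (Fin m) (Fin n) ℝ → ℝ)
    (G : Matrix (Fin m) (Fin n) ℝ → Matrix (Fin m) (Fin n) ℝ)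
    (hf : Differentiable ℝ f)
    (hG : Continuous G)
    (hgrad : ∀ Y X, fderiv ℝ f Y X = frobInner (G Y) X)
    (Uhat : Matrix (Fin m) (Fin k) ℝ) (Vhat : Matrix (Fin n) (Fin k) ℝ)
    (hU : Uhatᵀ * Uhat = 1) (hV : Vhatᵀ * Vhat = 1)
    (Shat : ℝ → Matrix (Fin k) (Fin k) ℝ)
    (Yhat : ℝ → Matrix (Fin m) (Fin n) ℝ)
    (hYhat : ∀ t, Yhat t = Uhat * Shat t * Vhatᵀ)
    (ht : t0 ≤ t1)
    (hS : ∀ t ∈ Set.Icc t0 t1, ∀ i j,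
      HasDerivAt (fun s => Shat s i j) ((-(Uhatᵀ * G (Yhat t) * Vhat)) i j) t)
    (Y0 Yhat1 Y1 : Matrix (Fin m) (Fin n) ℝ)
    (hY0 : Y0 = Yhat t0) (hYhat1 : Yhat1 = Yhat t1)
    (h : ℝ) (hh : h = t1 - t0)
    (hY1 : frobNorm (Y1 - Yhat1) ≤ ϑ)
    (hϑ : 0 ≤ ϑ)
    (α β : ℝ)
    (hα : α = ⨅ t : Set.Icc t0 t1, frobNorm (Uhatᵀ * G (Yhat ↑t) * Vhat))
    (hβ : β = ⨆ τ : Set.Icc (0:ℝ) 1, frobNorm (G ((τ : ℝ) • Y1 + (1 - (τ : ℝ)) • Yhat1))) :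
    f Y1 ≤ f Y0 - α ^ 2 * h + β * ϑ := by
  haveI : Nonempty ↥(Set.Icc t0 t1) := ⟨⟨t0, le_refl t0, ht⟩⟩
  set M : ℝ → Matrix (Fin k) (Fin k) ℝ := fun t => Uhatᵀ * G (Yhat t) * Vhat with hM
  -- α facts
  have hα0 : 0 ≤ α := by
    rw [hα]; exact le_ciInf fun t => frobNorm_nonneg _
  have hαle : ∀ t ∈ Set.Icc t0 t1, α ≤ frobNorm (M t) := by
    intro t htm
    rw [hα]
    have hbb : BddBelow (Set.range fun t : Set.Icc t0 t1 =>
        frobNorm (Uhatᵀ * G (Yhat ↑t) * Vhat)) := by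
      refine ⟨0, ?_⟩
      rintro x ⟨i, rfl⟩
      exact frobNorm_nonneg _
    exact ciInf_le hbb ⟨t, htm⟩
  -- Step 1: derivative of f ∘ Yhat
  have hgderiv : ∀ t ∈ Set.Icc t0 t1,
      HasDerivAt (fun s => f (Yhat s)) (-(frobNorm (M t) ^ 2)) t := by
    intro t htm
    have hYd : HasDerivAt Yhat (Uhat * (-(M t)) * Vhatᵀ) t := by
      have := hasDerivAt_USVt Uhat Vhat (S := Shat) (S' := -(M t)) (hS t htm)
      exact this.congr_of_eventuallyEq (Filter.Eventually.of_forall fun s => hYhat s)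
    have hcomp := (hf (Yhat t)).hasFDerivAt.comp_hasDerivAt t hYd
    have hval : fderiv ℝ f (Yhat t) (Uhat * (-(M t)) * Vhatᵀ) = -(frobNorm (M t) ^ 2) := by
      rw [hgrad, frobInner_conj, frobInner_neg_right, frobNorm_sq]
    replace hcomp := hcomp.congr_deriv hval
    exact hcomp
  -- Step 2: decrease along Yhat
  have hstep1 : f (Yhat t1) ≤ f (Yhat t0) + (-(α ^ 2)) * (t1 - t0) := by
    refine mvt_le ht hgderiv fun t htm => ?_
    have h1 : α ^ 2 ≤ frobNorm (M t) ^ 2 :=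
      pow_le_pow_left₀ hα0 (hαle t htm) 2
    linarith
  -- β facts
  haveI : Nonempty ↥(Set.Icc (0:ℝ) 1) := ⟨⟨0, le_refl 0, zero_le_one⟩⟩
  set p : ℝ → Matrix (Fin m) (Fin n) ℝ := fun τ => τ • Y1 + (1 - τ) • Yhat1 with hp
  have hpcont : Continuous p :=
    (continuous_id.smul continuous_const).add
      ((continuous_const.sub continuous_id).smul continuous_const)
  have hFcont : Continuous fun τ : ℝ => frobNorm (G (p τ)) := by
    have heq : (fun τ : ℝ => frobNorm (G (p τ))) = fun τ : ℝ => ‖G (p τ)‖ :=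
      funext fun τ => frobNorm_eq_norm _
    rw [heq]
    exact continuous_norm.comp (hG.comp hpcont)
  have hbdd : BddAbove (Set.range fun τ : Set.Icc (0:ℝ) 1 =>
      frobNorm (G ((τ : ℝ) • Y1 + (1 - (τ : ℝ)) • Yhat1))) := by
    have hr : (Set.range fun τ : Set.Icc (0:ℝ) 1 =>
        frobNorm (G ((τ : ℝ) • Y1 + (1 - (τ : ℝ)) • Yhat1)))
        = (fun τ : ℝ => frobNorm (G (p τ))) '' Set.Icc (0:ℝ) 1 := by
      rw [show (fun τ : Set.Icc (0:ℝ) 1 => frobNorm (G ((τ:ℝ) • Y1 + (1 - (τ:ℝ)) • Yhat1)))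
        = (fun τ : ℝ => frobNorm (G (p τ))) ∘ (Subtype.val : Set.Icc (0:ℝ) 1 → ℝ) from rfl,
        Set.range_comp, Subtype.range_coe]
    rw [hr]
    exact (isCompact_Icc.image hFcont).bddAbove
  have hβle : ∀ τ ∈ Set.Icc (0:ℝ) 1, frobNorm (G (p τ)) ≤ β := by
    intro τ hτ
    rw [hβ]
    exact le_ciSup hbdd ⟨τ, hτ⟩
  have hβ0 : 0 ≤ β :=
    le_trans (frobNorm_nonneg _) (hβle 0 ⟨le_refl 0, zero_le_one⟩)
  -- Step 3: truncation error bound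
  have hstep2 : f (p 1) ≤ f (p 0) + (β * ϑ) * (1 - 0) := by
    refine mvt_le (g := fun τ => f (p τ))
      (g' := fun τ => frobInner (G (p τ)) (Y1 - Yhat1)) (C := β * ϑ)
      zero_le_one (fun τ _ => ?_) (fun τ hτ => ?_)
    · have hpd : HasDerivAt p (Y1 - Yhat1) τ := by
        have h1 : HasDerivAt (fun s : ℝ => s • (Y1 - Yhat1) + Yhat1)
            ((1:ℝ) • (Y1 - Yhat1)) τ :=
          ((hasDerivAt_id τ).smul_const (Y1 - Yhat1)).add_const Yhat1
        rw [one_smul] at h1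
        refine h1.congr_of_eventuallyEq (Filter.Eventually.of_forall fun s => ?_)
        show s • Y1 + (1 - s) • Yhat1 = s • (Y1 - Yhat1) + Yhat1
        rw [smul_sub, sub_smul, one_smul]
        abel
      have hcomp := (hf (p τ)).hasFDerivAt.comp_hasDerivAt τ hpd
      have hv := hgrad (p τ) (Y1 - Yhat1)
      replace hcomp := hcomp.congr_deriv hv
      exact hcomp
    · exact le_trans (frobInner_le _ _)
        (mul_le_mul (hβle τ hτ) hY1 (frobNorm_nonneg _) hβ0)
  have hp1 : p 1 = Y1 := by simp [hp]
  have hp0 : p 0 = Yhat1 := by simp [hp]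
  rw [hp1, hp0] at hstep2
  rw [hY0, hYhat1] at *
  subst hh
  linarith [hstep1, hstep2]
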